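/- Let γ > 0, σ > 0 and μ, a ∈ ℝ. Set μ_A = μ − √5·σ²/γ, μ_B = μ + √5·σ²/γ, e10 = 1 − √5·a/γ + 5a²/(3γ²), e11 = √5/γ − 10a/(3γ²), e12 = 5/(3γ²), e20 = 1 + √5·a/γ + 5a²/(3γ²), e21 = √5/γ + 10a/(3γ²), e22 = 5/(3γ²). Then ∫_ℝ w · (1 + √5·|w−a|/γ + 5(w−a)²/(3γ²)) · exp(−√5·|w−a|/γ) · φ_{μ,σ}(w) dw = exp((5σ² + 2√5·γ(a−μ))/(2γ²)) · ((e10·μ_A + e11·(μ_A² + σ²) + e12·(μ_A³ + 3σ²μ_A)) · Φ((μ_A − a)/σ) + (e10 + e11·(μ_A + a) + e12·(μ_A² + 2σ² + a² + μ_A·a)) · (σ/√(2π)) · exp(−(a−μ_A)²/(2σ²))) − exp((5σ² − 2√5·γ(a−μ))/(2γ²)) · ((−e20·μ_B + e21·(μ_B² + σ²) + e22·(−μ_B³ − 3σ²μ_B)) · Φ((a − μ_B)/σ) + (e20 + e21·(−μ_B − a) + e22·(μ_B² + 2σ² + a² + μ_B·a)) · (σ/√(2π)) · exp(−(a−μ_B)²/(2σ²))).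 -/

import Mathlib

open MeasureTheory Real

/-- Standard normal cumulative distribution function. -/
noncomputable def Phi (t : ℝ) : ℝ :=
  ∫ u in Set.Iic t, (Real.sqrt (2 * Real.pi))⁻¹ * Real.exp (-u ^ 2 / 2)

/-- Normal density with mean μ and standard deviation σ. -/
noncomputable def normalPDF (μ σ x : ℝ) : ℝ :=
  (σ * Real.sqrt (2 * Real.pi))⁻¹ * Real.exp (-(x - μ) ^ 2 / (2 * σ ^ 2))



open MeasureTheory Real Filter Set
open scoped Topology

lemma gauss_bound {b : ℝ} (hb : 0 < b) (m : ℝ) (k : ℕ) (w : ℝ) :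
    |w ^ k * Real.exp (-b * (w - m) ^ 2)| ≤
      (k.factorial * Real.exp (|m| + 1 / (2 * b))) * Real.exp (-(b / 2) * (w - m) ^ 2) := by
  have hfac : (0:ℝ) < k.factorial := by exact_mod_cast k.factorial_pos
  have h1 : |w| ^ k ≤ (k.factorial : ℝ) * Real.exp |w| := by
    have := Real.pow_div_factorial_le_exp |w| (abs_nonneg w) k
    rw [div_le_iff₀ hfac] at this
    linarith
  have habs : |w ^ k * Real.exp (-b * (w - m) ^ 2)| = |w| ^ k * Real.exp (-b * (w - m) ^ 2) := by
    rw [abs_mul, abs_pow, Real.abs_exp]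
  set t := |w - m| with ht
  have ht2 : t ^ 2 = (w - m) ^ 2 := sq_abs _
  have h4 : (b / 2 * (w - m) ^ 2 + 1 / (2 * b) - t) * (2 * b) = (b * t - 1) ^ 2 := by
    rw [← ht2]; field_simp; ring
  have hkey : t ≤ b / 2 * (w - m) ^ 2 + 1 / (2 * b) := by
    nlinarith [sq_nonneg (b * t - 1)]
  have harg : |w| + (-b * (w - m) ^ 2) ≤ (|m| + 1 / (2 * b)) + (-(b / 2) * (w - m) ^ 2) := by
    have h5 : |w| ≤ t + |m| := by
      calc |w| = |(w - m) + m| := by ring_nf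
      _ ≤ |w - m| + |m| := abs_add_le _ _
    nlinarith
  calc |w ^ k * Real.exp (-b * (w - m) ^ 2)|
      = |w| ^ k * Real.exp (-b * (w - m) ^ 2) := habs
    _ ≤ ((k.factorial : ℝ) * Real.exp |w|) * Real.exp (-b * (w - m) ^ 2) :=
        mul_le_mul_of_nonneg_right h1 (Real.exp_nonneg _)
    _ = (k.factorial : ℝ) * Real.exp (|w| + (-b * (w - m) ^ 2)) := by
        rw [Real.exp_add]; ring
    _ ≤ (k.factorial : ℝ) * Real.exp ((|m| + 1 / (2 * b)) + (-(b / 2) * (w - m) ^ 2)) := by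
        have := Real.exp_le_exp.mpr harg
        nlinarith
    _ = (k.factorial * Real.exp (|m| + 1 / (2 * b))) * Real.exp (-(b / 2) * (w - m) ^ 2) := by
        rw [Real.exp_add]; ring

lemma integrable_gauss_shift {b : ℝ} (hb : 0 < b) (m : ℝ) :
    Integrable fun w : ℝ => Real.exp (-b * (w - m) ^ 2) :=
  (integrable_exp_neg_mul_sq hb).comp_sub_right m

lemma integrable_pow_gauss {b : ℝ} (hb : 0 < b) (m : ℝ) (k : ℕ) :
    Integrable fun w : ℝ => w ^ k * Real.exp (-b * (w - m) ^ 2) := by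
  apply Integrable.mono'
    (((integrable_gauss_shift (half_pos hb) m).const_mul
      (k.factorial * Real.exp (|m| + 1 / (2 * b)))))
  · exact ((continuous_pow k).mul
      (Real.continuous_exp.comp (by fun_prop))).aestronglyMeasurable
  · exact ae_of_all _ fun w => by rw [Real.norm_eq_abs]; exact gauss_bound hb m k w

lemma tendsto_pow_gauss_atTop {b : ℝ} (hb : 0 < b) (m : ℝ) (k : ℕ) :
    Tendsto (fun w : ℝ => w ^ k * Real.exp (-b * (w - m) ^ 2)) atTop (𝓝 0) := by
  have hsq : Tendsto (fun w : ℝ => (b / 2) * (w - m) ^ 2) atTop atTop := by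
    have h1 : Tendsto (fun w : ℝ => w - m) atTop atTop :=
      tendsto_atTop_add_const_right _ (-m) tendsto_id
    exact ((tendsto_pow_atTop two_ne_zero).comp h1).const_mul_atTop (half_pos hb)
  have hexp : Tendsto (fun w : ℝ => Real.exp (-((b / 2) * (w - m) ^ 2))) atTop (𝓝 0) :=
    Real.tendsto_exp_atBot.comp (tendsto_neg_atTop_atBot.comp hsq)
  have hC : Tendsto (fun w : ℝ =>
      (k.factorial * Real.exp (|m| + 1 / (2 * b))) * Real.exp (-(b / 2) * (w - m) ^ 2))
      atTop (𝓝 0) := by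
    simpa [neg_mul] using hexp.const_mul (k.factorial * Real.exp (|m| + 1 / (2 * b)))
  apply squeeze_zero_norm _ hC
  intro w
  rw [Real.norm_eq_abs]; exact gauss_bound hb m k w

lemma tendsto_pow_gauss_atBot {b : ℝ} (hb : 0 < b) (m : ℝ) (k : ℕ) :
    Tendsto (fun w : ℝ => w ^ k * Real.exp (-b * (w - m) ^ 2)) atBot (𝓝 0) := by
  have hsq : Tendsto (fun w : ℝ => (b / 2) * (w - m) ^ 2) atBot atTop := by
    have h1 : Tendsto (fun w : ℝ => w - m) atBot atBot :=
      tendsto_atBot_add_const_right _ (-m) tendsto_id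
    have h2 := (tendsto_pow_atTop (n := 2) two_ne_zero).comp (tendsto_abs_atBot_atTop.comp h1)
    have h3 : Tendsto (fun w : ℝ => (w - m) ^ 2) atBot atTop := by
      simpa [Function.comp_def, sq_abs] using h2
    exact h3.const_mul_atTop (half_pos hb)
  have hexp : Tendsto (fun w : ℝ => Real.exp (-((b / 2) * (w - m) ^ 2))) atBot (𝓝 0) :=
    Real.tendsto_exp_atBot.comp (tendsto_neg_atTop_atBot.comp hsq)
  have hC : Tendsto (fun w : ℝ =>
      (k.factorial * Real.exp (|m| + 1 / (2 * b))) * Real.exp (-(b / 2) * (w - m) ^ 2))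
      atBot (𝓝 0) := by
    simpa [neg_mul] using hexp.const_mul (k.factorial * Real.exp (|m| + 1 / (2 * b)))
  apply squeeze_zero_norm _ hC
  intro w
  rw [Real.norm_eq_abs]; exact gauss_bound hb m k w

noncomputable def stdg (u : ℝ) : ℝ := (Real.sqrt (2 * Real.pi))⁻¹ * Real.exp (-u ^ 2 / 2)

lemma integrable_stdg : Integrable stdg := by
  have h := (integrable_exp_neg_mul_sq (by norm_num : (0:ℝ) < 1/2)).const_mul
    (Real.sqrt (2 * Real.pi))⁻¹
  have : stdg = fun u : ℝ => (Real.sqrt (2 * Real.pi))⁻¹ * Real.exp (-(1/2) * u ^ 2) := by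
    funext u; unfold stdg; congr 1; ring
  rw [this]; exact h

lemma continuous_stdg : Continuous stdg := by
  unfold stdg; fun_prop

lemma hasDerivAt_Phi (t : ℝ) : HasDerivAt Phi (stdg t) t := by
  have key : ∀ x : ℝ, Phi x = Phi 0 + ∫ u in (0:ℝ)..x, stdg u := by
    intro x
    have := intervalIntegral.integral_Iic_sub_Iic
      (integrable_stdg.integrableOn (s := Iic (0:ℝ))) (integrable_stdg.integrableOn (s := Iic x))
    unfold Phi stdg at *
    linarith [this]
  have hP : Phi = fun x => Phi 0 + ∫ u in (0:ℝ)..x, stdg u := funext key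
  rw [hP]
  have := intervalIntegral.integral_hasDerivAt_right
    (f := stdg) (a := (0:ℝ)) (b := t) integrable_stdg.intervalIntegrable
    (continuous_stdg.stronglyMeasurableAtFilter _ _) continuous_stdg.continuousAt
  exact this.const_add (Phi 0)

lemma Phi_tendsto_atBot : Tendsto Phi atBot (𝓝 0) := by
  have h := tendsto_integral_filter_of_dominated_convergence (μ := volume)
    (l := atBot) (F := fun (t : ℝ) => (Set.Iic t).indicator stdg) (f := fun _ : ℝ => (0:ℝ))
    (bound := stdg)
    (Eventually.of_forall fun t =>
      (continuous_stdg.aestronglyMeasurable).indicator measurableSet_Iic)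
    (Eventually.of_forall fun t => ae_of_all _ fun u => by
      by_cases hu : u ∈ Set.Iic t
      · rw [Set.indicator_of_mem hu, Real.norm_eq_abs, abs_of_nonneg]
        unfold stdg; positivity
      · rw [Set.indicator_of_notMem hu]; simp only [norm_zero]; unfold stdg; positivity)
    integrable_stdg
    (ae_of_all _ fun u => by
      apply tendsto_const_nhds.congr'
      filter_upwards [eventually_lt_atBot u] with t ht
      rw [Set.indicator_of_notMem (by simpa using not_le.mpr ht)])
  have heq : ∀ t : ℝ, (∫ u, (Set.Iic t).indicator stdg u) = Phi t := by
    intro t; rw [integral_indicator measurableSet_Iic]; rfl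
  simpa [heq] using h

lemma hasDerivAt_normalPDF (m s : ℝ) (hs : s ≠ 0) (x : ℝ) :
    HasDerivAt (normalPDF m s) (-((x - m) / s ^ 2) * normalPDF m s x) x := by
  have h1 : HasDerivAt (fun w : ℝ => -(w - m) ^ 2 / (2 * s ^ 2))
      (-(2 * (x - m) ^ 1 * 1) / (2 * s ^ 2)) x :=
    ((((hasDerivAt_id x).sub_const m).pow 2).neg).div_const (2 * s ^ 2)
  have h2 := (h1.exp).const_mul (s * Real.sqrt (2 * Real.pi))⁻¹
  have : normalPDF m s = fun w =>
      (s * Real.sqrt (2 * Real.pi))⁻¹ * Real.exp (-(w - m) ^ 2 / (2 * s ^ 2)) := rfl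
  rw [this]
  refine h2.congr_deriv (Eq.symm ?_)
  field_simp

lemma integrable_cubic_normal (c0 c1 c2 c3 m s : ℝ) (hs : 0 < s) :
    Integrable fun w : ℝ => (c0 + c1 * w + c2 * w ^ 2 + c3 * w ^ 3) * normalPDF m s w := by
  have hb : (0:ℝ) < 1 / (2 * s ^ 2) := by positivity
  have key : ∀ j : ℕ, Integrable fun w : ℝ => w ^ j * normalPDF m s w := by
    intro j
    have h := (integrable_pow_gauss hb m j).const_mul (s * Real.sqrt (2 * Real.pi))⁻¹
    have : (fun w : ℝ => w ^ j * normalPDF m s w) =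
        fun w => (s * Real.sqrt (2 * Real.pi))⁻¹ * (w ^ j * Real.exp (-(1 / (2 * s ^ 2)) * (w - m) ^ 2)) := by
      funext w
      unfold normalPDF
      rw [show -(1 / (2 * s ^ 2)) * (w - m) ^ 2 = -(w - m) ^ 2 / (2 * s ^ 2) by ring]
      ring
    rw [this]; exact h
  have h := (((key 0).const_mul c0).add ((key 1).const_mul c1)).add
    (((key 2).const_mul c2).add ((key 3).const_mul c3))
  have : (fun w : ℝ => (c0 + c1 * w + c2 * w ^ 2 + c3 * w ^ 3) * normalPDF m s w) =
      fun w => (c0 * (w ^ 0 * normalPDF m s w) + c1 * (w ^ 1 * normalPDF m s w)) +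
        (c2 * (w ^ 2 * normalPDF m s w) + c3 * (w ^ 3 * normalPDF m s w)) := by
    funext w; ring
  rw [this]; exact h

lemma tendsto_quad_normal_atBot (q0 q1 q2 m s : ℝ) (hs : 0 < s) :
    Tendsto (fun w : ℝ => (q0 + q1 * w + q2 * w ^ 2) * normalPDF m s w) atBot (𝓝 0) := by
  have hb : (0:ℝ) < 1 / (2 * s ^ 2) := by positivity
  have key : ∀ j : ℕ, Tendsto (fun w : ℝ => w ^ j * normalPDF m s w) atBot (𝓝 0) := by
    intro j
    have h := (tendsto_pow_gauss_atBot hb m j).const_mul (s * Real.sqrt (2 * Real.pi))⁻¹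
    rw [mul_zero] at h
    apply h.congr
    intro w
    unfold normalPDF
    rw [show -(1 / (2 * s ^ 2)) * (w - m) ^ 2 = -(w - m) ^ 2 / (2 * s ^ 2) by ring]
    ring
  have h := ((key 0).const_mul q0).add (((key 1).const_mul q1).add ((key 2).const_mul q2))
  simp only [mul_zero, add_zero] at h
  apply h.congr
  intro w; ring

lemma tendsto_quad_normal_atTop (q0 q1 q2 m s : ℝ) (hs : 0 < s) :
    Tendsto (fun w : ℝ => (q0 + q1 * w + q2 * w ^ 2) * normalPDF m s w) atTop (𝓝 0) := by
  have hb : (0:ℝ) < 1 / (2 * s ^ 2) := by positivity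
  have key : ∀ j : ℕ, Tendsto (fun w : ℝ => w ^ j * normalPDF m s w) atTop (𝓝 0) := by
    intro j
    have h := (tendsto_pow_gauss_atTop hb m j).const_mul (s * Real.sqrt (2 * Real.pi))⁻¹
    rw [mul_zero] at h
    apply h.congr
    intro w
    unfold normalPDF
    rw [show -(1 / (2 * s ^ 2)) * (w - m) ^ 2 = -(w - m) ^ 2 / (2 * s ^ 2) by ring]
    ring
  have h := ((key 0).const_mul q0).add (((key 1).const_mul q1).add ((key 2).const_mul q2))
  simp only [mul_zero, add_zero] at h
  apply h.congr
  intro w; ring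
lemma cubic_Iic (m s t c0 c1 c2 c3 T q0 q1 q2 : ℝ) (hs : 0 < s)
    (hT : T = c0 + c1 * m + c2 * (m ^ 2 + s ^ 2) + c3 * (m ^ 3 + 3 * s ^ 2 * m))
    (hq0 : q0 = (c1 + c2 * m + c3 * (m ^ 2 + 2 * s ^ 2)) * s ^ 2)
    (hq1 : q1 = (c2 + c3 * m) * s ^ 2)
    (hq2 : q2 = c3 * s ^ 2) :
    ∫ w in Iic t, (c0 + c1 * w + c2 * w ^ 2 + c3 * w ^ 3) * normalPDF m s w
      = T * Phi ((t - m) / s) - (q0 + q1 * t + q2 * t ^ 2) * normalPDF m s t := by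
  have hs' : s ≠ 0 := ne_of_gt hs
  set F : ℝ → ℝ := fun w => T * Phi ((w - m) / s) - (q0 + q1 * w + q2 * w ^ 2) * normalPDF m s w
    with hF
  have hderiv : ∀ x : ℝ, HasDerivAt F ((c0 + c1 * x + c2 * x ^ 2 + c3 * x ^ 3) * normalPDF m s x) x := by
    intro x
    have h1 : HasDerivAt (fun w : ℝ => (w - m) / s) (1 / s) x := by
      simpa using ((hasDerivAt_id x).sub_const m).div_const s
    have h2 : HasDerivAt (fun w : ℝ => Phi ((w - m) / s)) (normalPDF m s x) x := by
      have := (hasDerivAt_Phi ((x - m) / s)).comp x h1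
      refine this.congr_deriv (Eq.symm ?_)
      unfold normalPDF stdg
      rw [div_pow, mul_inv]
      rw [show -((x - m) ^ 2 / s ^ 2) / 2 = -(x - m) ^ 2 / (2 * s ^ 2) by ring]
      ring
    have h3 : HasDerivAt (fun w : ℝ => q0 + q1 * w + q2 * w ^ 2) (q1 + 2 * q2 * x) x := by
      have := (((hasDerivAt_id x).const_mul q1).const_add q0).add
        ((hasDerivAt_pow 2 x).const_mul q2)
      refine this.congr_deriv (Eq.symm ?_)
      push_cast; ring
    have h5 := (h2.const_mul T).sub (h3.mul (hasDerivAt_normalPDF m s hs' x))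
    refine h5.congr_deriv (Eq.symm ?_)
    have hexp : (c0 + c1 * x + c2 * x ^ 2 + c3 * x ^ 3) =
        T - (q1 + 2 * q2 * x) + (q0 + q1 * x + q2 * x ^ 2) * ((x - m) / s ^ 2) := by
      subst hT hq0 hq1 hq2; field_simp; ring
    rw [hexp]; ring
  have hInt : IntegrableOn
      (fun w => (c0 + c1 * w + c2 * w ^ 2 + c3 * w ^ 3) * normalPDF m s w) (Iic t) :=
    (integrable_cubic_normal c0 c1 c2 c3 m s hs).integrableOn
  have hlim : Tendsto F atBot (𝓝 0) := by
    have l1 : Tendsto (fun w : ℝ => (w - m) / s) atBot atBot :=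
      (tendsto_atBot_add_const_right _ (-m) tendsto_id).atBot_div_const hs
    have l2 := (Phi_tendsto_atBot.comp l1).const_mul T
    have l3 := tendsto_quad_normal_atBot q0 q1 q2 m s hs
    have := l2.sub l3
    simpa [hF, Function.comp_def] using this
  have := integral_Iic_of_hasDerivAt_of_tendsto' (fun x _ => hderiv x) hInt hlim
  rw [this]
  simp only [hF]
  ring

lemma cubic_Ioi (m s t c0 c1 c2 c3 T q0 q1 q2 : ℝ) (hs : 0 < s)
    (hT : T = c0 + c1 * m + c2 * (m ^ 2 + s ^ 2) + c3 * (m ^ 3 + 3 * s ^ 2 * m))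
    (hq0 : q0 = (c1 + c2 * m + c3 * (m ^ 2 + 2 * s ^ 2)) * s ^ 2)
    (hq1 : q1 = (c2 + c3 * m) * s ^ 2)
    (hq2 : q2 = c3 * s ^ 2) :
    ∫ w in Ioi t, (c0 + c1 * w + c2 * w ^ 2 + c3 * w ^ 3) * normalPDF m s w
      = T * Phi ((m - t) / s) + (q0 + q1 * t + q2 * t ^ 2) * normalPDF m s t := by
  have hs' : s ≠ 0 := ne_of_gt hs
  set F : ℝ → ℝ := fun w => -(T * Phi ((m - w) / s)) - (q0 + q1 * w + q2 * w ^ 2) * normalPDF m s w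
    with hF
  have hderiv : ∀ x : ℝ, HasDerivAt F ((c0 + c1 * x + c2 * x ^ 2 + c3 * x ^ 3) * normalPDF m s x) x := by
    intro x
    have h1 : HasDerivAt (fun w : ℝ => (m - w) / s) (-(1 / s)) x := by
      exact (((hasDerivAt_id x).const_sub m).div_const s).congr_deriv (by ring)
    have h2 : HasDerivAt (fun w : ℝ => Phi ((m - w) / s)) (-(normalPDF m s x)) x := by
      have := (hasDerivAt_Phi ((m - x) / s)).comp x h1
      refine this.congr_deriv (Eq.symm ?_)
      unfold normalPDF stdg
      rw [div_pow, mul_inv]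
      rw [show ((m - x) ^ 2 : ℝ) = (x - m) ^ 2 by ring]
      rw [show -((x - m) ^ 2 / s ^ 2) / 2 = -(x - m) ^ 2 / (2 * s ^ 2) by ring]
      ring
    have h3 : HasDerivAt (fun w : ℝ => q0 + q1 * w + q2 * w ^ 2) (q1 + 2 * q2 * x) x := by
      have := (((hasDerivAt_id x).const_mul q1).const_add q0).add
        ((hasDerivAt_pow 2 x).const_mul q2)
      refine this.congr_deriv (Eq.symm ?_)
      push_cast; ring
    have h5 := ((h2.const_mul T).neg).sub (h3.mul (hasDerivAt_normalPDF m s hs' x))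
    refine h5.congr_deriv (Eq.symm ?_)
    have hexp : (c0 + c1 * x + c2 * x ^ 2 + c3 * x ^ 3) =
        T - (q1 + 2 * q2 * x) + (q0 + q1 * x + q2 * x ^ 2) * ((x - m) / s ^ 2) := by
      subst hT hq0 hq1 hq2; field_simp; ring
    rw [hexp]; ring
  have hInt : IntegrableOn
      (fun w => (c0 + c1 * w + c2 * w ^ 2 + c3 * w ^ 3) * normalPDF m s w) (Ioi t) :=
    (integrable_cubic_normal c0 c1 c2 c3 m s hs).integrableOn
  have hlim : Tendsto F atTop (𝓝 0) := by
    have l1 : Tendsto (fun w : ℝ => (m - w) / s) atTop atBot := by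
      apply Tendsto.atBot_div_const hs
      exact (tendsto_atBot_add_const_left _ m (tendsto_neg_atTop_atBot : Tendsto (fun x : ℝ => -x) atTop atBot)).congr (fun x => by ring)
    have l2 := ((Phi_tendsto_atBot.comp l1).const_mul T).neg
    have l3 := tendsto_quad_normal_atTop q0 q1 q2 m s hs
    have := l2.sub l3
    simpa [hF, Function.comp_def] using this
  have := integral_Ioi_of_hasDerivAt_of_tendsto' (fun x _ => hderiv x) hInt hlim
  rw [this]
  simp only [hF]
  ring

theorem integral_id_mul_matern25_mul_normalPDF (γ σ μ a μA μB e10 e11 e12 e20 e21 e22 : ℝ)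
    (hγ : 0 < γ) (hσ : 0 < σ)
    (hμA : μA = μ - Real.sqrt 5 * σ ^ 2 / γ) (hμB : μB = μ + Real.sqrt 5 * σ ^ 2 / γ)
    (he10 : e10 = 1 - Real.sqrt 5 * a / γ + 5 * a ^ 2 / (3 * γ ^ 2))
    (he11 : e11 = Real.sqrt 5 / γ - 10 * a / (3 * γ ^ 2))
    (he12 : e12 = 5 / (3 * γ ^ 2))
    (he20 : e20 = 1 + Real.sqrt 5 * a / γ + 5 * a ^ 2 / (3 * γ ^ 2))
    (he21 : e21 = Real.sqrt 5 / γ + 10 * a / (3 * γ ^ 2))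
    (he22 : e22 = 5 / (3 * γ ^ 2)) :
    ∫ w : ℝ,
        w * ((1 + Real.sqrt 5 * |w - a| / γ + 5 * (w - a) ^ 2 / (3 * γ ^ 2)) *
          Real.exp (-(Real.sqrt 5) * |w - a| / γ)) * normalPDF μ σ w =
      Real.exp ((5 * σ ^ 2 + 2 * Real.sqrt 5 * γ * (a - μ)) / (2 * γ ^ 2)) *
        ((e10 * μA + e11 * (μA ^ 2 + σ ^ 2) + e12 * (μA ^ 3 + 3 * σ ^ 2 * μA)) *
            Phi ((μA - a) / σ) +
          (e10 + e11 * (μA + a) + e12 * (μA ^ 2 + 2 * σ ^ 2 + a ^ 2 + μA * a)) *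
            (σ / Real.sqrt (2 * Real.pi)) * Real.exp (-(a - μA) ^ 2 / (2 * σ ^ 2))) -
      Real.exp ((5 * σ ^ 2 - 2 * Real.sqrt 5 * γ * (a - μ)) / (2 * γ ^ 2)) *
        ((-(e20 * μB) + e21 * (μB ^ 2 + σ ^ 2) + e22 * (-μB ^ 3 - 3 * σ ^ 2 * μB)) *
            Phi ((a - μB) / σ) +
          (e20 + e21 * (-μB - a) + e22 * (μB ^ 2 + 2 * σ ^ 2 + a ^ 2 + μB * a)) *
            (σ / Real.sqrt (2 * Real.pi)) * Real.exp (-(a - μB) ^ 2 / (2 * σ ^ 2))) := by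
  have hγ' : γ ≠ 0 := ne_of_gt hγ
  have hσ' : σ ≠ 0 := ne_of_gt hσ
  have hsqrt2pi : Real.sqrt (2 * Real.pi) ≠ 0 := by
    positivity
  set r := Real.sqrt 5 with hr
  have hr5 : r ^ 2 = 5 := Real.sq_sqrt (by norm_num)
  set KA := (5 * σ ^ 2 + 2 * r * γ * (a - μ)) / (2 * γ ^ 2) with hKA
  set KB := (5 * σ ^ 2 - 2 * r * γ * (a - μ)) / (2 * γ ^ 2) with hKB
  have keyB : ∀ w : ℝ, Real.exp (-r * (a - w) / γ) * normalPDF μ σ w =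
      Real.exp KB * normalPDF μB σ w := by
    intro w
    have harg : -r * (a - w) / γ + -(w - μ) ^ 2 / (2 * σ ^ 2) =
        KB + -(w - μB) ^ 2 / (2 * σ ^ 2) := by
      rw [hKB, hμB, show (5:ℝ) = r ^ 2 from hr5.symm]
      field_simp
      ring
    unfold normalPDF
    calc Real.exp (-r * (a - w) / γ) * ((σ * Real.sqrt (2 * Real.pi))⁻¹ *
          Real.exp (-(w - μ) ^ 2 / (2 * σ ^ 2)))
        = (σ * Real.sqrt (2 * Real.pi))⁻¹ *
            Real.exp (-r * (a - w) / γ + -(w - μ) ^ 2 / (2 * σ ^ 2)) := by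
          rw [Real.exp_add]; ring
      _ = (σ * Real.sqrt (2 * Real.pi))⁻¹ *
            Real.exp (KB + -(w - μB) ^ 2 / (2 * σ ^ 2)) := by rw [harg]
      _ = Real.exp KB * ((σ * Real.sqrt (2 * Real.pi))⁻¹ *
            Real.exp (-(w - μB) ^ 2 / (2 * σ ^ 2))) := by rw [Real.exp_add]; ring
  have keyA : ∀ w : ℝ, Real.exp (-r * (w - a) / γ) * normalPDF μ σ w =
      Real.exp KA * normalPDF μA σ w := by
    intro w
    have harg : -r * (w - a) / γ + -(w - μ) ^ 2 / (2 * σ ^ 2) =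
        KA + -(w - μA) ^ 2 / (2 * σ ^ 2) := by
      rw [hKA, hμA, show (5:ℝ) = r ^ 2 from hr5.symm]
      field_simp
      ring
    unfold normalPDF
    calc Real.exp (-r * (w - a) / γ) * ((σ * Real.sqrt (2 * Real.pi))⁻¹ *
          Real.exp (-(w - μ) ^ 2 / (2 * σ ^ 2)))
        = (σ * Real.sqrt (2 * Real.pi))⁻¹ *
            Real.exp (-r * (w - a) / γ + -(w - μ) ^ 2 / (2 * σ ^ 2)) := by
          rw [Real.exp_add]; ring
      _ = (σ * Real.sqrt (2 * Real.pi))⁻¹ *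
            Real.exp (KA + -(w - μA) ^ 2 / (2 * σ ^ 2)) := by rw [harg]
      _ = Real.exp KA * ((σ * Real.sqrt (2 * Real.pi))⁻¹ *
            Real.exp (-(w - μA) ^ 2 / (2 * σ ^ 2))) := by rw [Real.exp_add]; ring
  have hEq1 : EqOn (fun w : ℝ =>
      w * ((1 + r * |w - a| / γ + 5 * (w - a) ^ 2 / (3 * γ ^ 2)) *
        Real.exp (-r * |w - a| / γ)) * normalPDF μ σ w)
      (fun w : ℝ => Real.exp KB *
        ((0 + e20 * w + -e21 * w ^ 2 + e22 * w ^ 3) * normalPDF μB σ w)) (Iic a) := by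
    intro w hw
    have habs : |w - a| = a - w := by
      rw [abs_of_nonpos (sub_nonpos.mpr hw), neg_sub]
    simp only [habs]
    calc w * ((1 + r * (a - w) / γ + 5 * (w - a) ^ 2 / (3 * γ ^ 2)) *
          Real.exp (-r * (a - w) / γ)) * normalPDF μ σ w
        = (w * (1 + r * (a - w) / γ + 5 * (w - a) ^ 2 / (3 * γ ^ 2))) *
            (Real.exp (-r * (a - w) / γ) * normalPDF μ σ w) := by ring
      _ = (w * (1 + r * (a - w) / γ + 5 * (w - a) ^ 2 / (3 * γ ^ 2))) *
            (Real.exp KB * normalPDF μB σ w) := by rw [keyB w]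
      _ = Real.exp KB * ((0 + e20 * w + -e21 * w ^ 2 + e22 * w ^ 3) * normalPDF μB σ w) := by
          rw [he20, he21, he22]; ring
  have hEq2 : EqOn (fun w : ℝ =>
      w * ((1 + r * |w - a| / γ + 5 * (w - a) ^ 2 / (3 * γ ^ 2)) *
        Real.exp (-r * |w - a| / γ)) * normalPDF μ σ w)
      (fun w : ℝ => Real.exp KA *
        ((0 + e10 * w + e11 * w ^ 2 + e12 * w ^ 3) * normalPDF μA σ w)) (Ioi a) := by
    intro w hw
    have habs : |w - a| = w - a := abs_of_nonneg (sub_nonneg.mpr (le_of_lt hw))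
    simp only [habs]
    calc w * ((1 + r * (w - a) / γ + 5 * (w - a) ^ 2 / (3 * γ ^ 2)) *
          Real.exp (-r * (w - a) / γ)) * normalPDF μ σ w
        = (w * (1 + r * (w - a) / γ + 5 * (w - a) ^ 2 / (3 * γ ^ 2))) *
            (Real.exp (-r * (w - a) / γ) * normalPDF μ σ w) := by ring
      _ = (w * (1 + r * (w - a) / γ + 5 * (w - a) ^ 2 / (3 * γ ^ 2))) *
            (Real.exp KA * normalPDF μA σ w) := by rw [keyA w]
      _ = Real.exp KA * ((0 + e10 * w + e11 * w ^ 2 + e12 * w ^ 3) * normalPDF μA σ w) := by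
          rw [he10, he11, he12]; ring
  have hgB : Integrable (fun w : ℝ => Real.exp KB *
      ((0 + e20 * w + -e21 * w ^ 2 + e22 * w ^ 3) * normalPDF μB σ w)) :=
    (integrable_cubic_normal 0 e20 (-e21) e22 μB σ hσ).const_mul _
  have hgA : Integrable (fun w : ℝ => Real.exp KA *
      ((0 + e10 * w + e11 * w ^ 2 + e12 * w ^ 3) * normalPDF μA σ w)) :=
    (integrable_cubic_normal 0 e10 e11 e12 μA σ hσ).const_mul _
  have hI1 : IntegrableOn (fun w : ℝ =>
      w * ((1 + r * |w - a| / γ + 5 * (w - a) ^ 2 / (3 * γ ^ 2)) *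
        Real.exp (-r * |w - a| / γ)) * normalPDF μ σ w) (Iic a) :=
    (hgB.integrableOn).congr_fun hEq1.symm measurableSet_Iic
  have hI2 : IntegrableOn (fun w : ℝ =>
      w * ((1 + r * |w - a| / γ + 5 * (w - a) ^ 2 / (3 * γ ^ 2)) *
        Real.exp (-r * |w - a| / γ)) * normalPDF μ σ w) (Ioi a) :=
    (hgA.integrableOn).congr_fun hEq2.symm measurableSet_Ioi
  rw [← intervalIntegral.integral_Iic_add_Ioi hI1 hI2]
  rw [setIntegral_congr_fun measurableSet_Iic hEq1,
      setIntegral_congr_fun measurableSet_Ioi hEq2]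
  rw [integral_const_mul, integral_const_mul]
  rw [cubic_Iic μB σ a 0 e20 (-e21) e22 _ _ _ _ hσ rfl rfl rfl rfl,
      cubic_Ioi μA σ a 0 e10 e11 e12 _ _ _ _ hσ rfl rfl rfl rfl]
  unfold normalPDF
  field_simp
  ring
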